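/- Two-sided discrete Gaussian tail bound: For every integer m ≥ 1 and every real σ > 0, if X is distributed according to the discrete Gaussian N_ℤ(σ²) and Z is distributed according to the centered real Gaussian measure N(0, σ²), then Pr[|X| ≥ m] ≤ Pr[|Z| ≥ m − 1]. -/

import Mathlib

open scoped ENNReal
open ProbabilityTheory MeasureTheory Real Set

/-- The discrete Gaussian mass function `N_ℤ(v)` (real-valued) with variance
parameter `v = σ²`. -/
noncomputable def discreteGaussianPMF (v : ℝ) (x : ℤ) : ℝ :=
  Real.exp (-(x : ℝ) ^ 2 / (2 * v)) / ∑' y : ℤ, Real.exp (-(y : ℝ) ^ 2 / (2 * v))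

lemma summable_exp_neg_mul_int_sq' {b : ℝ} (hb : 0 < b) :
    Summable fun x : ℤ => Real.exp (-b * (x : ℝ) ^ 2) := by
  have hnat : Summable fun n : ℕ => Real.exp (-b * (n : ℝ) ^ 2) := by
    refine Summable.of_nonneg_of_le (fun n => (Real.exp_pos _).le)
      (fun n => ?_) (summable_geometric_of_lt_one (Real.exp_pos _).le
        (Real.exp_lt_one_iff.2 (neg_lt_zero.2 hb)))
    rw [← Real.exp_nat_mul]
    apply Real.exp_le_exp.2
    have h0 : (0 : ℝ) ≤ (n : ℝ) := n.cast_nonneg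
    have h1 : (n : ℝ) ≤ (n : ℝ) ^ 2 := by exact_mod_cast Nat.le_self_pow two_ne_zero n
    nlinarith
  apply Summable.of_nat_of_neg <;> simpa using hnat

set_option maxHeartbeats 1000000 in
/-- Two-sided discrete Gaussian tail bound: for integer `m ≥ 1`,
`Pr[|X| ≥ m] ≤ Pr[|Z| ≥ m - 1]` where `X ∼ N_ℤ(σ²)` and `Z ∼ N(0, σ²)`. -/
theorem discreteGaussian_two_sided_tail (m : ℤ) (hm : 1 ≤ m) (σ : ℝ) (hσ : 0 < σ) :
    ENNReal.ofReal (∑' x : ℤ, if m ≤ |x| then discreteGaussianPMF (σ ^ 2) x else 0)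
      ≤ gaussianReal 0 ((σ ^ 2).toNNReal) {z : ℝ | (m : ℝ) - 1 ≤ |z|} := by
  have hv : (0 : ℝ) < σ ^ 2 := by positivity
  have hπ := Real.pi_pos
  set f : ℝ → ℝ := fun z => Real.exp (-z ^ 2 / (2 * σ ^ 2)) with hf
  have hf_pos : ∀ z, 0 < f z := fun z => Real.exp_pos _
  set c : ℝ := Real.sqrt (2 * π * σ ^ 2) with hc
  have hc0 : 0 < c := Real.sqrt_pos.2 (by positivity)
  set S : ℝ := ∑' y : ℤ, Real.exp (-(y : ℝ) ^ 2 / (2 * σ ^ 2)) with hS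
  -- Poisson summation lower bound on the denominator
  have hSc : c ≤ S := by
    have ha : (0 : ℝ) < (2 * π * σ ^ 2)⁻¹ := by positivity
    have key := Real.tsum_exp_neg_mul_int_sq ha
    have h1 : (fun n : ℤ => Real.exp (-π * (2 * π * σ ^ 2)⁻¹ * (n : ℝ) ^ 2))
        = fun n : ℤ => Real.exp (-(n : ℝ) ^ 2 / (2 * σ ^ 2)) := by
      funext n; congr 1; field_simp
    have h2 : (fun n : ℤ => Real.exp (-π / (2 * π * σ ^ 2)⁻¹ * (n : ℝ) ^ 2))
        = fun n : ℤ => Real.exp (-(2 * π ^ 2 * σ ^ 2) * (n : ℝ) ^ 2) := by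
      funext n; congr 1; rw [div_eq_mul_inv, inv_inv]; ring
    rw [h1, h2] at key
    have hrp : (1 : ℝ) / ((2 * π * σ ^ 2)⁻¹) ^ (1 / 2 : ℝ) = c := by
      rw [← Real.sqrt_eq_rpow, Real.sqrt_inv, one_div, inv_inv, hc]
    rw [hrp] at key
    have hsum2 : Summable fun n : ℤ => Real.exp (-(2 * π ^ 2 * σ ^ 2) * (n : ℝ) ^ 2) :=
      summable_exp_neg_mul_int_sq' (by positivity)
    have hone : (1 : ℝ) ≤ ∑' n : ℤ, Real.exp (-(2 * π ^ 2 * σ ^ 2) * (n : ℝ) ^ 2) := by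
      have := Summable.le_tsum hsum2 0 (fun j _ => (Real.exp_pos _).le)
      simpa using this
    calc c = c * 1 := (mul_one c).symm
    _ ≤ c * ∑' n : ℤ, Real.exp (-(2 * π ^ 2 * σ ^ 2) * (n : ℝ) ^ 2) := by
        exact mul_le_mul_of_nonneg_left hone hc0.le
    _ = S := key.symm
  have hSpos : 0 < S := lt_of_lt_of_le hc0 hSc
  -- summability of the Gaussian over ℤ
  have harg : ∀ x : ℝ, -x ^ 2 / (2 * σ ^ 2) = -(2 * σ ^ 2)⁻¹ * x ^ 2 := by
    intro x; field_simp
  have hsumf : Summable fun x : ℤ => f (x : ℝ) := by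
    simp only [hf, harg]
    exact summable_exp_neg_mul_int_sq' (by positivity)
  set g : ℤ → ℝ := fun x => if m ≤ |x| then f (x : ℝ) else 0 with hg
  have hg_nonneg : ∀ x, 0 ≤ g x := by
    intro x; by_cases h : m ≤ |x| <;> simp [hg, h, (hf_pos _).le]
  have hsumg : Summable g := by
    refine hsumf.of_nonneg_of_le hg_nonneg (fun x => ?_)
    by_cases h : m ≤ |x| <;> simp [hg, h, (hf_pos _).le]
  set U : ℝ := ∑' x : ℤ, g x with hU
  have hU_nonneg : 0 ≤ U := tsum_nonneg hg_nonneg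
  -- rewrite the LHS sum
  have hLHS : (∑' x : ℤ, if m ≤ |x| then discreteGaussianPMF (σ ^ 2) x else 0) = U / S := by
    have : ∀ x : ℤ, (if m ≤ |x| then discreteGaussianPMF (σ ^ 2) x else 0) = g x / S := by
      intro x; by_cases h : m ≤ |x| <;>
        simp [hg, h, discreteGaussianPMF, hf, hS, zero_div]
    rw [tsum_congr this, tsum_div_const]
  -- the intervals
  set I : ℤ → Set ℝ := fun x =>
    if m ≤ x then Set.Ioc ((x : ℝ) - 1) (x : ℝ)
    else if x ≤ -m then Set.Ico (x : ℝ) ((x : ℝ) + 1) else ∅ with hI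
  have hImeas : ∀ x, MeasurableSet (I x) := by
    intro x
    simp only [hI]
    split_ifs <;> first | exact measurableSet_Ioc | exact measurableSet_Ico | exact MeasurableSet.empty
  set A : Set ℝ := {z : ℝ | (m : ℝ) - 1 ≤ |z|} with hA
  have hIA : ∀ x, I x ⊆ A := by
    intro x z hz
    simp only [hI] at hz
    split_ifs at hz with h1 h2
    · have hx : (m : ℝ) ≤ (x : ℝ) := by exact_mod_cast h1
      have : (m : ℝ) - 1 ≤ z := by
        have := hz.1; linarith
      exact le_trans this (le_abs_self z)
    · have hx : (x : ℝ) ≤ -(m : ℝ) := by exact_mod_cast h2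
      have : (m : ℝ) - 1 ≤ -z := by
        have := hz.2; linarith
      exact le_trans this (neg_le_abs z)
    · exact absurd hz (Set.notMem_empty z)
  have hIdisj : Pairwise (Function.onFun Disjoint I) := by
    intro x y hxy
    rw [Function.onFun, Set.disjoint_left]
    intro z hzx hzy
    simp only [hI] at hzx hzy
    have hmr : (1 : ℝ) ≤ (m : ℝ) := by exact_mod_cast hm
    split_ifs at hzx with h1 h2 <;> split_ifs at hzy with h3 h4
    · -- both positive
      have hx : (m : ℝ) ≤ (x : ℝ) := by exact_mod_cast h1
      have hy : (m : ℝ) ≤ (y : ℝ) := by exact_mod_cast h3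
      have hxy1 : (x : ℝ) < (y : ℝ) + 1 := by
        have := hzx.1; have := hzy.2; linarith
      have hxy2 : (y : ℝ) < (x : ℝ) + 1 := by
        have := hzy.1; have := hzx.2; linarith
      have : x < y + 1 := by exact_mod_cast hxy1
      have : y < x + 1 := by exact_mod_cast hxy2
      omega
    · -- x positive, y negative
      have hx : (m : ℝ) ≤ (x : ℝ) := by exact_mod_cast h1
      have hy : (y : ℝ) ≤ -(m : ℝ) := by exact_mod_cast h4
      have hz1 : 0 < z := by have := hzx.1; linarith
      have hz2 : z < 0 := by have := hzy.2; linarith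
      linarith
    · exact absurd hzy (Set.notMem_empty z)
    · -- x negative, y positive
      have hx : (x : ℝ) ≤ -(m : ℝ) := by exact_mod_cast h2
      have hy : (m : ℝ) ≤ (y : ℝ) := by exact_mod_cast h3
      have hz1 : z < 0 := by have := hzx.2; linarith
      have hz2 : 0 < z := by have := hzy.1; linarith
      linarith
    · -- both negative
      have hx : (x : ℝ) ≤ -(m : ℝ) := by exact_mod_cast h2
      have hy : (y : ℝ) ≤ -(m : ℝ) := by exact_mod_cast h4
      have hxy1 : (x : ℝ) < (y : ℝ) + 1 := by
        have := hzx.1; have := hzy.2; linarith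
      have hxy2 : (y : ℝ) < (x : ℝ) + 1 := by
        have := hzy.1; have := hzx.2; linarith
      have : x < y + 1 := by exact_mod_cast hxy1
      have : y < x + 1 := by exact_mod_cast hxy2
      omega
    · exact absurd hzy (Set.notMem_empty z)
    · exact absurd hzx (Set.notMem_empty z)
    · exact absurd hzx (Set.notMem_empty z)
    · exact absurd hzx (Set.notMem_empty z)
  have hfmeas : Measurable fun z : ℝ => ENNReal.ofReal (f z) := by
    apply Measurable.ennreal_ofReal; fun_prop
  -- termwise bound
  have hterm : ∀ x : ℤ, ENNReal.ofReal (g x) ≤ ∫⁻ z in I x, ENNReal.ofReal (f z) := by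
    intro x
    by_cases h1 : m ≤ x
    · have hgx : g x = f (x : ℝ) := by
        have : m ≤ |x| := le_trans h1 (le_abs_self x)
        simp [hg, this]
      have hIx : I x = Set.Ioc ((x : ℝ) - 1) (x : ℝ) := by simp [hI, h1]
      have hxr : (m : ℝ) ≤ (x : ℝ) := by exact_mod_cast h1
      have hmr : (1 : ℝ) ≤ (m : ℝ) := by exact_mod_cast hm
      rw [hgx, hIx]
      have hvol : volume (Set.Ioc ((x : ℝ) - 1) (x : ℝ)) = 1 := by
        rw [Real.volume_Ioc]; norm_num
      calc ENNReal.ofReal (f (x : ℝ))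
          = ENNReal.ofReal (f (x : ℝ)) * volume (Set.Ioc ((x : ℝ) - 1) (x : ℝ)) := by
            rw [hvol, mul_one]
        _ = ∫⁻ _ in Set.Ioc ((x : ℝ) - 1) (x : ℝ), ENNReal.ofReal (f (x : ℝ)) :=
            (setLIntegral_const _ _).symm
        _ ≤ ∫⁻ z in Set.Ioc ((x : ℝ) - 1) (x : ℝ), ENNReal.ofReal (f z) := by
            refine setLIntegral_mono hfmeas (fun z hz => ?_)
            apply ENNReal.ofReal_le_ofReal
            apply Real.exp_le_exp.2
            have hz1 := hz.1; have hz2 := hz.2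
            have hzsq : z ^ 2 ≤ (x : ℝ) ^ 2 := by nlinarith
            have h2v : (0 : ℝ) < 2 * σ ^ 2 := by positivity
            exact div_le_div_of_nonneg_right (by linarith) h2v.le
    · by_cases h2 : x ≤ -m
      · have hgx : g x = f (x : ℝ) := by
          have : m ≤ |x| := by rw [abs_of_nonpos (by omega : x ≤ 0)]; omega
          simp [hg, this]
        have hIx : I x = Set.Ico (x : ℝ) ((x : ℝ) + 1) := by simp [hI, h1, h2]
        have hxr : (x : ℝ) ≤ -(m : ℝ) := by exact_mod_cast h2
        have hmr : (1 : ℝ) ≤ (m : ℝ) := by exact_mod_cast hm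
        rw [hgx, hIx]
        have hvol : volume (Set.Ico (x : ℝ) ((x : ℝ) + 1)) = 1 := by
          rw [Real.volume_Ico]; norm_num
        calc ENNReal.ofReal (f (x : ℝ))
            = ENNReal.ofReal (f (x : ℝ)) * volume (Set.Ico (x : ℝ) ((x : ℝ) + 1)) := by
              rw [hvol, mul_one]
          _ = ∫⁻ _ in Set.Ico (x : ℝ) ((x : ℝ) + 1), ENNReal.ofReal (f (x : ℝ)) :=
              (setLIntegral_const _ _).symm
          _ ≤ ∫⁻ z in Set.Ico (x : ℝ) ((x : ℝ) + 1), ENNReal.ofReal (f z) := by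
              refine setLIntegral_mono hfmeas (fun z hz => ?_)
              apply ENNReal.ofReal_le_ofReal
              apply Real.exp_le_exp.2
              have hz1 := hz.1; have hz2 := hz.2
              have hzsq : z ^ 2 ≤ (x : ℝ) ^ 2 := by nlinarith
              have h2v : (0 : ℝ) < 2 * σ ^ 2 := by positivity
              exact div_le_div_of_nonneg_right (by linarith) h2v.le
      · have hgx : g x = 0 := by
          have : ¬ m ≤ |x| := by rcases abs_cases x with ⟨h, _⟩ | ⟨h, _⟩ <;> omega
          simp [hg, this]
        simp [hgx]
  -- combine: ofReal U ≤ ∫⁻ over A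
  have hUJ : ENNReal.ofReal U ≤ ∫⁻ z in A, ENNReal.ofReal (f z) := by
    calc ENNReal.ofReal U = ∑' x : ℤ, ENNReal.ofReal (g x) :=
          ENNReal.ofReal_tsum_of_nonneg hg_nonneg hsumg
      _ ≤ ∑' x : ℤ, ∫⁻ z in I x, ENNReal.ofReal (f z) := ENNReal.tsum_le_tsum hterm
      _ = ∫⁻ z in ⋃ x : ℤ, I x, ENNReal.ofReal (f z) :=
          (lintegral_iUnion hImeas hIdisj _).symm
      _ ≤ ∫⁻ z in A, ENNReal.ofReal (f z) :=
          lintegral_mono_set (Set.iUnion_subset hIA)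
  -- the Gaussian measure side
  have hv' : (σ ^ 2).toNNReal ≠ 0 := by
    simp [Real.toNNReal_pos.2 hv, (Real.toNNReal_pos.2 hv).ne']
  have hcoe : (((σ ^ 2).toNNReal) : ℝ) = σ ^ 2 := Real.coe_toNNReal _ hv.le
  have hpdf : ∀ z : ℝ, gaussianPDF 0 ((σ ^ 2).toNNReal) z
      = ENNReal.ofReal c⁻¹ * ENNReal.ofReal (f z) := by
    intro z
    rw [gaussianPDF, gaussianPDFReal, hcoe, sub_zero,
      ← ENNReal.ofReal_mul (by positivity)]
  rw [gaussianReal_apply 0 hv', hLHS]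
  calc ENNReal.ofReal (U / S)
      ≤ ENNReal.ofReal (c⁻¹ * U) := by
        apply ENNReal.ofReal_le_ofReal
        rw [inv_mul_eq_div]
        exact div_le_div_of_nonneg_left hU_nonneg hc0 hSc
    _ = ENNReal.ofReal c⁻¹ * ENNReal.ofReal U := ENNReal.ofReal_mul (by positivity)
    _ ≤ ENNReal.ofReal c⁻¹ * ∫⁻ z in A, ENNReal.ofReal (f z) :=
        mul_le_mul_right hUJ _
    _ = ∫⁻ z in A, ENNReal.ofReal c⁻¹ * ENNReal.ofReal (f z) :=
        (lintegral_const_mul _ hfmeas).symm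
    _ = ∫⁻ z in A, gaussianPDF 0 ((σ ^ 2).toNNReal) z := by
        refine lintegral_congr (fun z => (hpdf z).symm)
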